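/- Let d be an odd positive integer, χ a Dirichlet character of conductor d, and w an odd positive integer. Then for all n ≥ 0: ∑_{l=0}^{d−1} (−1)^l χ(l) 𝓔_{n, λ, χ}(w x + w l) = w^n ∑_{l=0}^{d w − 1} (−1)^l χ(l) 𝓔_{n, λ/w, χ}(x + l/w), as polynomials in x over ℚ(λ). -/

import Mathlib

open scoped Nat

/-- The degenerate falling factorial `(x|λ)_n = x(x−λ)⋯(x−(n−1)λ)`. -/
noncomputable def degFall {R : Type*} [CommRing R] (x lam : R) (n : ℕ) : R :=
  ∏ j ∈ Finset.range n, (x - (j : R) * lam)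

/-- `(1+λt)^{y/λ} := ∑_{n≥0} (y|λ)_n tⁿ/n!` as a formal power series. -/
noncomputable def degSeries {R : Type*} [CommRing R] [Algebra ℚ R] (y lam : R) :
    PowerSeries R :=
  PowerSeries.mk fun n => (n ! : ℚ)⁻¹ • degFall y lam n

/-- The generating identity defining the generalized degenerate Euler polynomials
`𝓔_{n,λ,χ}(x)` attached to χ, with parameter `mu`:
`((1+μt)^{d/μ}+1)·∑ 𝓔_{n,μ,χ}(x) tⁿ/n! = 2(∑_{a<d}(−1)^a χ(a)(1+μt)^{a/μ})(1+μt)^{x/μ}`. -/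
noncomputable def genDegEulerRel (d : ℕ) (χ : DirichletCharacter ℂ d) (mu : ℂ)
    (E : ℕ → Polynomial ℂ) : Prop :=
  (degSeries (Polynomial.C (d : ℂ)) (Polynomial.C mu) + 1) *
      PowerSeries.mk (fun n => (n ! : ℂ)⁻¹ • E n)
    = 2 * ((∑ a ∈ Finset.range d,
        ((-1 : ℂ) ^ a * χ (a : ZMod d)) • degSeries (Polynomial.C (a : ℂ)) (Polynomial.C mu)) *
        degSeries Polynomial.X (Polynomial.C mu))

section aux
variable {R : Type*} [CommRing R]

lemma degFall_zero (x lam : R) : degFall x lam 0 = 1 := by simp [degFall]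

lemma degFall_succ (x lam : R) (n : ℕ) :
    degFall x lam (n + 1) = degFall x lam n * (x - (n : R) * lam) :=
  Finset.prod_range_succ _ _

lemma degFall_add (x y lam : R) (n : ℕ) :
    degFall (x + y) lam n
      = ∑ k ∈ Finset.range (n + 1),
          (n.choose k : R) * (degFall x lam k * degFall y lam (n - k)) := by
  induction n with
  | zero => simp [degFall]
  | succ n ih =>
    have e3 : (∑ k ∈ Finset.range (n + 1),
          (n.choose (k + 1) : R) * (degFall x lam (k + 1) * degFall y lam (n - k)))
        + ((n + 1).choose 0 : R) * (degFall x lam 0 * degFall y lam (n + 1 - 0))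
        = ∑ k ∈ Finset.range (n + 1),
            (n.choose k : R) * (degFall x lam k * degFall y lam (n + 1 - k)) := by
      rw [Finset.sum_range_succ
        (fun k => (n.choose (k + 1) : R) * (degFall x lam (k + 1) * degFall y lam (n - k)))]
      rw [Finset.sum_range_succ' (fun k =>
        (n.choose k : R) * (degFall x lam k * degFall y lam (n + 1 - k))) n]
      simp [Nat.succ_sub_succ_eq_sub, Nat.choose_succ_self]
    have e1 : ∑ k ∈ Finset.range (n + 2),
        ((n + 1).choose k : R) * (degFall x lam k * degFall y lam (n + 1 - k))
        = (∑ k ∈ Finset.range (n + 1),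
            (n.choose k : R) * (degFall x lam (k + 1) * degFall y lam (n - k)))
          + ∑ k ∈ Finset.range (n + 1),
            (n.choose k : R) * (degFall x lam k * degFall y lam (n + 1 - k)) := by
      rw [Finset.sum_range_succ' (fun k => ((n + 1).choose k : R) *
          (degFall x lam k * degFall y lam (n + 1 - k)))]
      simp only [Nat.succ_sub_succ_eq_sub, Nat.choose_succ_succ, Nat.cast_add, add_mul,
        Finset.sum_add_distrib]
      linear_combination e3
    rw [degFall_succ, ih, Finset.sum_mul, e1]
    rw [← Finset.sum_add_distrib]
    refine Finset.sum_congr rfl fun k hk => ?_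
    rw [Finset.mem_range] at hk
    have h1 : n + 1 - k = (n - k) + 1 := by omega
    have h2 : ((n - k : ℕ) : R) = (n : R) - (k : R) :=
      Nat.cast_sub (by omega)
    rw [h1, degFall_succ, degFall_succ, h2]
    ring

end aux

section series
variable {R : Type*} [CommRing R] [Algebra ℚ R]

lemma degSeries_coeff (y lam : R) (n : ℕ) :
    PowerSeries.coeff n (degSeries y lam) = (n ! : ℚ)⁻¹ • degFall y lam n := by
  simp [degSeries]

lemma degSeries_zero (lam : R) : degSeries (0 : R) lam = 1 := by
  ext n
  rw [degSeries_coeff, PowerSeries.coeff_one]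
  cases n with
  | zero => simp [degFall]
  | succ n =>
    have : degFall (0 : R) lam (n + 1) = 0 := by
      unfold degFall
      apply Finset.prod_eq_zero (Finset.mem_range.mpr (Nat.succ_pos n))
      simp
    simp [this]

lemma degSeries_mul (x y lam : R) :
    degSeries x lam * degSeries y lam = degSeries (x + y) lam := by
  ext n
  rw [PowerSeries.coeff_mul, Finset.Nat.sum_antidiagonal_eq_sum_range_succ_mk]
  rw [degSeries_coeff, degFall_add, Finset.smul_sum]
  refine Finset.sum_congr rfl fun k hk => ?_
  rw [Finset.mem_range] at hk
  have hk' : k ≤ n := by omega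
  rw [degSeries_coeff, degSeries_coeff]
  rw [smul_mul_smul_comm]
  have hcast : (n.choose k : R) = algebraMap ℚ R (n.choose k : ℚ) := by
    simp
  rw [hcast, ← Algebra.smul_def, smul_smul]
  congr 1
  have hfac := Nat.choose_mul_factorial_mul_factorial hk'
  have h1 : (k ! : ℚ) ≠ 0 := by positivity
  have h2 : ((n - k)! : ℚ) ≠ 0 := by positivity
  have h3 : (n ! : ℚ) ≠ 0 := by positivity
  field_simp
  rw [← Nat.cast_mul, ← Nat.cast_mul, ← hfac]
  push_cast
  ring

lemma degSeries_nat_mul (x lam : R) (j : ℕ) :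
    degSeries ((j : R) * x) lam = (degSeries x lam) ^ j := by
  induction j with
  | zero => simp [degSeries_zero]
  | succ j ih =>
    have : ((j : R) + 1) * x = (j : R) * x + x := by ring
    rw [pow_succ, ← ih, Nat.cast_add, Nat.cast_one, this, degSeries_mul]

lemma degFall_mul_left (c x lam : R) (n : ℕ) :
    degFall (c * x) (c * lam) n = c ^ n * degFall x lam n := by
  unfold degFall
  rw [← Finset.card_range n, ← Finset.prod_const, Finset.card_range, ← Finset.prod_mul_distrib]
  exact Finset.prod_congr rfl fun j _ => by ring

lemma rescale_degSeries (c x lam : R) :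
    PowerSeries.rescale c (degSeries x lam) = degSeries (c * x) (c * lam) := by
  unfold degSeries
  rw [PowerSeries.rescale_mk]
  exact PowerSeries.ext fun n => by
    simp [degFall_mul_left, mul_smul_comm]

lemma map_degSeries {S : Type*} [CommRing S] [Algebra ℚ S] (f : R →+* S) (x lam : R) :
    PowerSeries.map f (degSeries x lam) = degSeries (f x) (f lam) := by
  refine PowerSeries.ext fun n => ?_
  rw [PowerSeries.coeff_map, degSeries_coeff, degSeries_coeff]
  have h1 : f ((n ! : ℚ)⁻¹ • degFall x lam n) = (n ! : ℚ)⁻¹ • f (degFall x lam n) :=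
    map_rat_smul f.toAddMonoidHom _ _
  rw [h1]
  congr 1
  unfold degFall
  rw [map_prod]
  exact Finset.prod_congr rfl fun j _ => by
    rw [map_sub, map_mul, map_natCast]

end series

lemma csmul_eq (c : ℂ) (S : PowerSeries (Polynomial ℂ)) :
    c • S = PowerSeries.C (Polynomial.C c) * S := by
  ext n
  rw [PowerSeries.coeff_C_mul, PowerSeries.coeff_smul, Polynomial.smul_eq_C_mul]

lemma map_mk_comp (q : Polynomial ℂ) (f : ℕ → Polynomial ℂ) :
    PowerSeries.map (Polynomial.eval₂RingHom Polynomial.C q)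
        (PowerSeries.mk fun n => (n ! : ℂ)⁻¹ • f n)
      = PowerSeries.mk fun n => (n ! : ℂ)⁻¹ • (f n).comp q := by
  ext n
  rw [PowerSeries.coeff_map, PowerSeries.coeff_mk, PowerSeries.coeff_mk,
    Polynomial.smul_eq_C_mul, Polynomial.smul_eq_C_mul]
  simp [Polynomial.coe_eval₂RingHom, Polynomial.eval₂_mul, Polynomial.eval₂_C, Polynomial.comp]

lemma rescale_CC {R : Type*} [CommRing R] (a b : R) :
    PowerSeries.rescale a (PowerSeries.C b) = PowerSeries.C b := by
  ext n
  rw [PowerSeries.coeff_rescale]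
  cases n with
  | zero => simp
  | succ n => simp [PowerSeries.coeff_C]

lemma rel_comp {d : ℕ} {χ : DirichletCharacter ℂ d} {mu : ℂ} {E : ℕ → Polynomial ℂ}
    (h : genDegEulerRel d χ mu E) (q : Polynomial ℂ) :
    (degSeries (Polynomial.C (d : ℂ)) (Polynomial.C mu) + 1) *
        PowerSeries.mk (fun n => (n ! : ℂ)⁻¹ • (E n).comp q)
      = 2 * ((∑ a ∈ Finset.range d,
            PowerSeries.C (Polynomial.C ((-1 : ℂ) ^ a * χ (a : ZMod d))) *
              degSeries (Polynomial.C (a : ℂ)) (Polynomial.C mu)) *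
          degSeries q (Polynomial.C mu)) := by
  unfold genDegEulerRel at h
  simp only [csmul_eq] at h
  have h2 := congrArg (PowerSeries.map (Polynomial.eval₂RingHom Polynomial.C q)) h
  simp only [map_mul, map_add, map_one, map_ofNat, map_sum, map_mk_comp, PowerSeries.map_C,
    map_degSeries, Polynomial.coe_eval₂RingHom, Polynomial.eval₂_C, Polynomial.eval₂_X] at h2
  simpa only [map_mul] using h2

lemma sum_range_mul_split {M : Type*} [AddCommMonoid M] (d w : ℕ) (f : ℕ → M) :
    ∑ l ∈ Finset.range (d * w), f l
      = ∑ j ∈ Finset.range w, ∑ a ∈ Finset.range d, f (d * j + a) := by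
  induction w with
  | zero => simp
  | succ w ih =>
    rw [Nat.mul_succ, Finset.sum_range_add, ih, Finset.sum_range_succ]

lemma odd_geom {S : Type*} [CommRing S] (u : S) {w : ℕ} (hw : Odd w) :
    (∑ j ∈ Finset.range w, (-1 : S) ^ j * u ^ j) * (u + 1) = u ^ w + 1 := by
  have h := geom_sum_mul (-u) w
  have he : ∑ j ∈ Finset.range w, (-u) ^ j
      = ∑ j ∈ Finset.range w, (-1 : S) ^ j * u ^ j :=
    Finset.sum_congr rfl fun j _ => by rw [neg_pow]
  rw [he, hw.neg_pow] at h
  linear_combination -h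

/-- the w₂ = 1 specialization of the symmetry identity:
`∑_{l<d} (−1)^l χ(l) 𝓔_{n,λ,χ}(wx + wl) = wⁿ ∑_{l<dw} (−1)^l χ(l) 𝓔_{n,λ/w,χ}(x + l/w)`,
as polynomials in x over ℂ. -/
theorem genDegEuler_symmetry_w_one (d w : ℕ) (hd0 : 0 < d) (hw0 : 0 < w)
    (hd : Odd d) (hw : Odd w)
    (χ : DirichletCharacter ℂ d) (hχ : χ.conductor = d) (lam : ℂ) (hlam : lam ≠ 0)
    (E E' : ℕ → Polynomial ℂ)
    (hE : genDegEulerRel d χ lam E)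
    (hE' : genDegEulerRel d χ (lam / w) E')
    (n : ℕ) :
    ∑ l ∈ Finset.range d,
        Polynomial.C ((-1 : ℂ) ^ l * χ (l : ZMod d)) *
          (E n).comp (Polynomial.C (w : ℂ) * Polynomial.X + Polynomial.C ((w : ℂ) * l))
      = Polynomial.C ((w : ℂ) ^ n) *
          ∑ l ∈ Finset.range (d * w),
            Polynomial.C ((-1 : ℂ) ^ l * χ (l : ZMod d)) *
              (E' n).comp (Polynomial.X + Polynomial.C ((l : ℂ) / (w : ℂ))) := by
  classical
  have hwC : (w : ℂ) ≠ 0 := Nat.cast_ne_zero.mpr hw0.ne'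
  set CC : Polynomial ℂ →+* PowerSeries (Polynomial ℂ) := PowerSeries.C with hCC
  set u : PowerSeries (Polynomial ℂ) := degSeries (Polynomial.C (d : ℂ)) (Polynomial.C lam)
    with hu
  set gX : PowerSeries (Polynomial ℂ) :=
    degSeries (Polynomial.C (w : ℂ) * Polynomial.X) (Polynomial.C lam) with hgX
  set A : PowerSeries (Polynomial ℂ) := ∑ a ∈ Finset.range d,
    CC (Polynomial.C ((-1 : ℂ) ^ a * χ (a : ZMod d))) *
      degSeries (Polynomial.C (a : ℂ)) (Polynomial.C lam) with hA
  set B : PowerSeries (Polynomial ℂ) := ∑ a ∈ Finset.range d,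
    CC (Polynomial.C ((-1 : ℂ) ^ a * χ (a : ZMod d))) *
      degSeries (Polynomial.C ((w : ℂ) * a)) (Polynomial.C lam) with hB
  set T : PowerSeries (Polynomial ℂ) :=
    ∑ j ∈ Finset.range w, (-1 : PowerSeries (Polynomial ℂ)) ^ j * u ^ j with hT
  set Cs : PowerSeries (Polynomial ℂ) := ∑ l ∈ Finset.range (d * w),
    CC (Polynomial.C ((-1 : ℂ) ^ l * χ (l : ZMod d))) *
      degSeries (Polynomial.C (l : ℂ)) (Polynomial.C lam) with hCs
  set L : PowerSeries (Polynomial ℂ) := ∑ l ∈ Finset.range d,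
    CC (Polynomial.C ((-1 : ℂ) ^ l * χ (l : ZMod d))) *
      PowerSeries.mk (fun n => (n ! : ℂ)⁻¹ •
        (E n).comp (Polynomial.C (w : ℂ) * Polynomial.X + Polynomial.C ((w : ℂ) * l))) with hL
  set Rs : PowerSeries (Polynomial ℂ) := ∑ l ∈ Finset.range (d * w),
    CC (Polynomial.C ((-1 : ℂ) ^ l * χ (l : ZMod d))) *
      PowerSeries.mk (fun n => (Polynomial.C (w : ℂ)) ^ n * ((n ! : ℂ)⁻¹ •
        (E' n).comp (Polynomial.X + Polynomial.C ((l : ℂ) / (w : ℂ))))) with hRs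
  -- powers of u
  have hupow : ∀ j : ℕ, degSeries (Polynomial.C ((d : ℂ) * j)) (Polynomial.C lam) = u ^ j := by
    intro j
    have harg : Polynomial.C ((d : ℂ) * j) = ((j : ℕ) : Polynomial ℂ) * Polynomial.C (d : ℂ) := by
      rw [← Polynomial.C_eq_natCast, ← Polynomial.C_mul, mul_comm]
    rw [harg, degSeries_nat_mul, hu]
  -- eqn1
  have eqn1 : ∀ l : ℕ,
      (u + 1) * PowerSeries.mk (fun n => (n ! : ℂ)⁻¹ •
          (E n).comp (Polynomial.C (w : ℂ) * Polynomial.X + Polynomial.C ((w : ℂ) * l)))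
        = 2 * (A * (gX * degSeries (Polynomial.C ((w : ℂ) * l)) (Polynomial.C lam))) := by
    intro l
    have h := rel_comp hE (Polynomial.C (w : ℂ) * Polynomial.X + Polynomial.C ((w : ℂ) * l))
    rw [← degSeries_mul] at h
    exact h
  -- eqn2
  have eqn2 : ∀ l : ℕ,
      (u ^ w + 1) * PowerSeries.mk (fun n => (Polynomial.C (w : ℂ)) ^ n * ((n ! : ℂ)⁻¹ •
          (E' n).comp (Polynomial.X + Polynomial.C ((l : ℂ) / (w : ℂ)))))
        = 2 * (B * (gX * degSeries (Polynomial.C (l : ℂ)) (Polynomial.C lam))) := by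
    intro l
    have h := rel_comp hE' (Polynomial.X + Polynomial.C ((l : ℂ) / (w : ℂ)))
    have h2 := congrArg (PowerSeries.rescale (Polynomial.C (w : ℂ))) h
    rw [map_mul, map_add, map_one, PowerSeries.rescale_mk, map_mul, map_mul, map_sum] at h2
    simp only [map_mul, rescale_CC, rescale_degSeries, map_ofNat] at h2
    have hc1 : Polynomial.C (w : ℂ) * Polynomial.C (lam / w) = Polynomial.C lam := by
      rw [← Polynomial.C_mul, mul_comm, div_mul_cancel₀ lam hwC]
    have hc2 : Polynomial.C (w : ℂ) * Polynomial.C (d : ℂ) = Polynomial.C ((d : ℂ) * w) := by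
      rw [← Polynomial.C_mul, mul_comm]
    have hc3 : Polynomial.C (w : ℂ) *
        (Polynomial.X + Polynomial.C ((l : ℂ) / (w : ℂ)))
        = Polynomial.C (w : ℂ) * Polynomial.X + Polynomial.C (l : ℂ) := by
      rw [mul_add, ← Polynomial.C_mul, mul_comm ((w:ℂ)), div_mul_cancel₀ _ hwC]
    have hc4 : ∀ a : ℕ, Polynomial.C (w : ℂ) * Polynomial.C (a : ℂ)
        = Polynomial.C ((w : ℂ) * a) := fun a => by rw [← Polynomial.C_mul]
    rw [hc1, hc2, hc3, hupow w] at h2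
    simp only [hc4] at h2
    rw [← degSeries_mul] at h2
    rw [hB, hgX]
    simpa only [map_mul] using h2
  -- hL
  have hLeq : (u + 1) * L = 2 * (A * (gX * B)) := by
    rw [hL, Finset.mul_sum]
    have step : ∀ l ∈ Finset.range d,
        (u + 1) * (CC (Polynomial.C ((-1 : ℂ) ^ l * χ (l : ZMod d))) *
          PowerSeries.mk (fun n => (n ! : ℂ)⁻¹ •
            (E n).comp (Polynomial.C (w : ℂ) * Polynomial.X + Polynomial.C ((w : ℂ) * l))))
        = CC (Polynomial.C ((-1 : ℂ) ^ l * χ (l : ZMod d))) *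
            (2 * (A * (gX * degSeries (Polynomial.C ((w : ℂ) * l)) (Polynomial.C lam)))) := by
      intro l _
      rw [mul_left_comm, eqn1 l]
    rw [Finset.sum_congr rfl step, hB]
    simp only [Finset.mul_sum]
    exact Finset.sum_congr rfl fun l _ => by ring
  -- hRs
  have hRseq : (u ^ w + 1) * Rs = 2 * (B * (gX * Cs)) := by
    rw [hRs, Finset.mul_sum]
    have step : ∀ l ∈ Finset.range (d * w),
        (u ^ w + 1) * (CC (Polynomial.C ((-1 : ℂ) ^ l * χ (l : ZMod d))) *
          PowerSeries.mk (fun n => (Polynomial.C (w : ℂ)) ^ n * ((n ! : ℂ)⁻¹ •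
            (E' n).comp (Polynomial.X + Polynomial.C ((l : ℂ) / (w : ℂ))))))
        = CC (Polynomial.C ((-1 : ℂ) ^ l * χ (l : ZMod d))) *
            (2 * (B * (gX * degSeries (Polynomial.C (l : ℂ)) (Polynomial.C lam)))) := by
      intro l _
      rw [mul_left_comm, eqn2 l]
    rw [Finset.sum_congr rfl step, hCs]
    simp only [Finset.mul_sum]
    exact Finset.sum_congr rfl fun l _ => by ring
  -- Cs = T * A
  have hCsTA : Cs = T * A := by
    rw [hCs, sum_range_mul_split d w, hT, Finset.sum_mul]
    refine Finset.sum_congr rfl fun j _ => ?_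
    rw [hA, Finset.mul_sum]
    refine Finset.sum_congr rfl fun a _ => ?_
    have hχper : (((d * j + a : ℕ) : ZMod d)) = (a : ZMod d) := by
      push_cast [ZMod.natCast_self]
      ring
    have hsign : ((-1 : ℂ)) ^ (d * j + a) = (-1 : ℂ) ^ j * (-1 : ℂ) ^ a := by
      rw [pow_add, pow_mul, hd.neg_one_pow]
    have hdecomp : degSeries (Polynomial.C ((d * j + a : ℕ) : ℂ)) (Polynomial.C lam)
        = u ^ j * degSeries (Polynomial.C (a : ℂ)) (Polynomial.C lam) := by
      have : Polynomial.C ((d * j + a : ℕ) : ℂ)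
          = Polynomial.C ((d : ℂ) * j) + Polynomial.C (a : ℂ) := by
        rw [← Polynomial.C_add]
        push_cast
        ring
      rw [this, ← degSeries_mul, hupow j]
    rw [hχper, hsign, hdecomp]
    have hCCneg : CC (Polynomial.C ((-1 : ℂ) ^ j * (-1 : ℂ) ^ a * χ (a : ZMod d)))
        = (-1 : PowerSeries (Polynomial ℂ)) ^ j *
            CC (Polynomial.C ((-1 : ℂ) ^ a * χ (a : ZMod d))) := by
      have h1 : ((-1 : ℂ) ^ j * (-1 : ℂ) ^ a * χ (a : ZMod d))
          = (-1 : ℂ) ^ j * ((-1 : ℂ) ^ a * χ (a : ZMod d)) := by ring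
      rw [h1, Polynomial.C_mul, map_mul]
      simp only [map_pow, map_neg, map_one]
    rw [hCCneg]
    ring
  -- geometric identity
  have hgeo : (u + 1) * T = u ^ w + 1 := by
    rw [hT, mul_comm]
    exact odd_geom u hw
  -- combine
  have key : ((u + 1) * (u ^ w + 1)) * L = ((u + 1) * (u ^ w + 1)) * Rs := by
    calc ((u + 1) * (u ^ w + 1)) * L = (u ^ w + 1) * ((u + 1) * L) := by ring
      _ = (u ^ w + 1) * (2 * (A * (gX * B))) := by rw [hLeq]
      _ = (u + 1) * (2 * (B * (gX * (T * A)))) := by rw [← hgeo]; ring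
      _ = (u + 1) * (2 * (B * (gX * Cs))) := by rw [hCsTA]
      _ = (u + 1) * ((u ^ w + 1) * Rs) := by rw [hRseq]
      _ = ((u + 1) * (u ^ w + 1)) * Rs := by ring
  have hcu : PowerSeries.constantCoeff u = 1 := by
    rw [hu, ← PowerSeries.coeff_zero_eq_constantCoeff, degSeries_coeff]
    simp [degFall_zero]
  have h2unit : IsUnit (2 : Polynomial ℂ) := by
    refine IsUnit.of_mul_eq_one (a := 2) (Polynomial.C (2⁻¹ : ℂ)) ?_
    rw [← map_ofNat (Polynomial.C : ℂ →+* Polynomial ℂ) 2, ← Polynomial.C_mul]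
    norm_num
  have hunit : IsUnit ((u + 1) * (u ^ w + 1)) := by
    refine IsUnit.mul ?_ ?_
    · rw [PowerSeries.isUnit_iff_constantCoeff, map_add, map_one, hcu]
      have h11 : (1 : Polynomial ℂ) + 1 = 2 := by norm_num
      rw [h11]; exact h2unit
    · rw [PowerSeries.isUnit_iff_constantCoeff, map_add, map_one, map_pow, hcu, one_pow]
      have h11 : (1 : Polynomial ℂ) + 1 = 2 := by norm_num
      rw [h11]; exact h2unit
  have hLRs : L = Rs := hunit.mul_left_cancel key
  -- extract coefficient n
  have hco := congrArg (PowerSeries.coeff n) hLRs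
  rw [hL, hRs] at hco
  simp only [map_sum, hCC, PowerSeries.coeff_C_mul, PowerSeries.coeff_mk] at hco
  have hfacne : ((n ! : ℂ))⁻¹ ≠ 0 := by
    simp [Nat.factorial_ne_zero]
  refine mul_left_cancel₀ (a := Polynomial.C ((n ! : ℂ))⁻¹)
    (Polynomial.C_ne_zero.mpr hfacne) ?_
  calc Polynomial.C ((n ! : ℂ))⁻¹ * ∑ l ∈ Finset.range d,
        Polynomial.C ((-1 : ℂ) ^ l * χ (l : ZMod d)) *
          (E n).comp (Polynomial.C (w : ℂ) * Polynomial.X + Polynomial.C ((w : ℂ) * l))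
      = ∑ l ∈ Finset.range d,
          Polynomial.C ((-1 : ℂ) ^ l * χ (l : ZMod d)) *
            ((n ! : ℂ)⁻¹ • (E n).comp
              (Polynomial.C (w : ℂ) * Polynomial.X + Polynomial.C ((w : ℂ) * l))) := by
        rw [Finset.mul_sum]
        exact Finset.sum_congr rfl fun l _ => by
          rw [Polynomial.smul_eq_C_mul]; ring
    _ = ∑ l ∈ Finset.range (d * w),
          Polynomial.C ((-1 : ℂ) ^ l * χ (l : ZMod d)) *
            ((Polynomial.C (w : ℂ)) ^ n * ((n ! : ℂ)⁻¹ • (E' n).comp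
              (Polynomial.X + Polynomial.C ((l : ℂ) / (w : ℂ))))) := hco
    _ = Polynomial.C ((n ! : ℂ))⁻¹ * (Polynomial.C ((w : ℂ) ^ n) *
          ∑ l ∈ Finset.range (d * w),
            Polynomial.C ((-1 : ℂ) ^ l * χ (l : ZMod d)) *
              (E' n).comp (Polynomial.X + Polynomial.C ((l : ℂ) / (w : ℂ)))) := by
        rw [Finset.mul_sum, Finset.mul_sum]
        exact Finset.sum_congr rfl fun l _ => by
          rw [Polynomial.smul_eq_C_mul, Polynomial.C_pow]; ring
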